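/- In the 1-planted REM with parameters (μ̂ log M, σ̂ √(log M / 2), M, 1), if 1 < γ = μ̂/σ̂ < 2, then the probability that the planted index is the maximum satisfies P[l̂ = l] = 1 − M^{−(γ−1)² + o(1)} as M → ∞. -/

import Mathlib

open Real Filter MeasureTheory ProbabilityTheory

/-- Probability that the planted weight `E_l ~ N(μ̂ log M, σ̂² log M/2)` is at least
the maximum of `M` independent unbiased weights `N(0, σ̂² log M/2)` (1-planted REM). -/
noncomputable def premSuccess (μHat σHat : ℝ) (M : ℕ) : ℝ :=
  (((ProbabilityTheory.gaussianReal (μHat * Real.log M)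
        (Real.toNNReal (σHat ^ 2 * Real.log M / 2))).prod
      (MeasureTheory.Measure.pi fun _ : Fin M =>
        ProbabilityTheory.gaussianReal 0 (Real.toNNReal (σHat ^ 2 * Real.log M / 2))))
    {p : ℝ × (Fin M → ℝ) | ∀ i : Fin M, p.2 i ≤ p.1}).toReal

open Set NNReal ENNReal

variable {v : ℝ≥0}

lemma pdf_mul_exp (m : ℝ) (hv : v ≠ 0) (c x : ℝ) :
    gaussianPDFReal m v x * rexp (c * x)
      = rexp (c * m + c ^ 2 * v / 2) * gaussianPDFReal (m + c * v) v x := by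
  have hv' : (0:ℝ) < v := by positivity
  have key : rexp (-(x - m) ^ 2 / (2 * (v:ℝ))) * rexp (c * x)
      = rexp (c * m + c ^ 2 * v / 2) * rexp (-(x - (m + c * v)) ^ 2 / (2 * v)) := by
    rw [← Real.exp_add, ← Real.exp_add]
    congr 1
    field_simp
    ring
  simp only [gaussianPDFReal]
  rw [mul_assoc, key]
  ring

lemma integral_pdf_mul_exp (m : ℝ) (hv : v ≠ 0) (c : ℝ) :
    ∫ x, gaussianPDFReal m v x * rexp (c * x) = rexp (c * m + c ^ 2 * v / 2) := by
  simp_rw [pdf_mul_exp m hv c]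
  rw [integral_const_mul, integral_gaussianPDFReal_eq_one _ hv, mul_one]

lemma integrable_pdf_mul_exp (m : ℝ) (hv : v ≠ 0) (c : ℝ) :
    Integrable (fun x => gaussianPDFReal m v x * rexp (c * x)) := by
  have : (fun x => gaussianPDFReal m v x * rexp (c * x))
      = fun x => rexp (c * m + c ^ 2 * v / 2) * gaussianPDFReal (m + c * v) v x := by
    funext x; exact pdf_mul_exp m hv c x
  rw [this]
  exact (integrable_gaussianPDFReal _ _).const_mul _

lemma gauss_chernoff (m : ℝ) (hv : v ≠ 0) (c t : ℝ) {s : Set ℝ} (hs : MeasurableSet s)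
    (h : ∀ x ∈ s, 0 ≤ c * (x - t)) :
    (gaussianReal m v s).toReal ≤ rexp (c * (m - t) + c ^ 2 * v / 2) := by
  rw [gaussianReal_apply_eq_integral m hv s,
    ENNReal.toReal_ofReal (integral_nonneg fun x => gaussianPDFReal_nonneg _ _ _)]
  set g : ℝ → ℝ := fun x => gaussianPDFReal m v x * rexp (c * (x - t)) with hg
  have hgeq : g = fun x => rexp (-(c * t)) * (gaussianPDFReal m v x * rexp (c * x)) := by
    funext x
    simp only [hg]
    rw [mul_comm (rexp (-(c*t))), mul_assoc, ← Real.exp_add]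
    ring_nf
  have hgint : Integrable g := by
    rw [hgeq]; exact (integrable_pdf_mul_exp m hv c).const_mul _
  have h1 : ∫ x in s, gaussianPDFReal m v x ≤ ∫ x in s, g x := by
    refine setIntegral_mono_on (integrable_gaussianPDFReal m v).integrableOn
      hgint.integrableOn hs fun x hx => ?_
    simpa [hg] using le_mul_of_one_le_right (gaussianPDFReal_nonneg m v x)
      (Real.one_le_exp (h x hx))
  have h2 : ∫ x in s, g x ≤ ∫ x, g x := by
    refine setIntegral_le_integral hgint (ae_of_all _ fun x => ?_)
    exact mul_nonneg (gaussianPDFReal_nonneg m v x) (Real.exp_nonneg _)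
  have h3 : ∫ x, g x = rexp (c * (m - t) + c ^ 2 * v / 2) := by
    rw [hgeq, integral_const_mul, integral_pdf_mul_exp m hv c, ← Real.exp_add]
    ring_nf
  linarith

lemma gauss_Ioi_le (m : ℝ) (hv : v ≠ 0) {t : ℝ} (h : m ≤ t) :
    (gaussianReal m v (Ioi t)).toReal ≤ rexp (-(t - m) ^ 2 / (2 * v)) := by
  have hv' : (0:ℝ) < v := by positivity
  have := gauss_chernoff m hv ((t - m) / v) t measurableSet_Ioi
    (fun x hx => mul_nonneg (div_nonneg (sub_nonneg.2 h) hv'.le)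
      (sub_nonneg.2 (le_of_lt hx)))
  convert this using 2
  field_simp
  ring

lemma gauss_Iic_le (m : ℝ) (hv : v ≠ 0) {t : ℝ} (h : t ≤ m) :
    (gaussianReal m v (Iic t)).toReal ≤ rexp (-(t - m) ^ 2 / (2 * v)) := by
  have hv' : (0:ℝ) < v := by positivity
  have hnn : ∀ x ∈ Iic t, 0 ≤ (t - m) / (v:ℝ) * (x - t) := fun x hx => by
    have h1 : (t - m)/(v:ℝ) ≤ 0 := div_nonpos_of_nonpos_of_nonneg (sub_nonpos.2 h) hv'.le
    have h2 : x - t ≤ 0 := sub_nonpos.2 hx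
    nlinarith
  have := gauss_chernoff m hv ((t - m) / v) t measurableSet_Iic hnn
  convert this using 2
  field_simp
  ring

lemma gauss_Ioi_ge (m : ℝ) (hv : v ≠ 0) {t : ℝ} (h : m ≤ t) :
    rexp (-(t - m) ^ 2 / (2 * v) - (t - m) / √(v:ℝ) - 3)
      ≤ (gaussianReal m v (Ioi t)).toReal := by
  have hv' : (0:ℝ) < v := by positivity
  have hs0 : (0:ℝ) < √(v:ℝ) := Real.sqrt_pos.2 hv'
  have hs0sq : (√(v:ℝ))^2 = v := Real.sq_sqrt hv'.le
  rw [gaussianReal_apply_eq_integral m hv _,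
    ENNReal.toReal_ofReal (integral_nonneg fun x => gaussianPDFReal_nonneg _ _ _)]
  have hsub : Ioc t (t + √(v:ℝ)) ⊆ Ioi t := Ioc_subset_Ioi_self
  have h1 : ∫ x in Ioc t (t + √(v:ℝ)), gaussianPDFReal m v x
      ≤ ∫ x in Ioi t, gaussianPDFReal m v x := by
    refine setIntegral_mono_set (integrable_gaussianPDFReal m v).integrableOn
      (ae_of_all _ fun x => gaussianPDFReal_nonneg m v x) (HasSubset.Subset.eventuallyLE hsub)
  have h2 : ∫ x in Ioc t (t + √(v:ℝ)), gaussianPDFReal m v (t + √(v:ℝ))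
      ≤ ∫ x in Ioc t (t + √(v:ℝ)), gaussianPDFReal m v x := by
    refine setIntegral_mono_on (integrableOn_const measure_Ioc_lt_top.ne)
      (integrable_gaussianPDFReal m v).integrableOn measurableSet_Ioc fun x hx => ?_
    simp only [gaussianPDFReal]
    have hx1 : t < x := hx.1
    have hx2 : x ≤ t + √(v:ℝ) := hx.2
    have hnum : -(t + √(v:ℝ) - m)^2 / (2*(v:ℝ)) ≤ -(x - m)^2 / (2*(v:ℝ)) := by
      rw [div_le_div_iff₀ (by positivity) (by positivity)]
      have hsq : (x - m)^2 ≤ (t + √(v:ℝ) - m)^2 :=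
        pow_le_pow_left₀ (by linarith) (by linarith) 2
      nlinarith [hv', hsq]
    exact mul_le_mul_of_nonneg_left (Real.exp_le_exp.2 hnum) (by positivity)
  have h3 : ∫ x in Ioc t (t + √(v:ℝ)), gaussianPDFReal m v (t + √(v:ℝ))
      = √(v:ℝ) * gaussianPDFReal m v (t + √(v:ℝ)) := by
    rw [setIntegral_const, measureReal_def, Real.volume_Ioc, smul_eq_mul]
    congr 1
    rw [show t + √(v:ℝ) - t = √(v:ℝ) by ring, ENNReal.toReal_ofReal hs0.le]
  have h4 : rexp (-(t - m) ^ 2 / (2 * v) - (t - m) / √(v:ℝ) - 3)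
      ≤ √(v:ℝ) * gaussianPDFReal m v (t + √(v:ℝ)) := by
    simp only [gaussianPDFReal]
    have hexp : rexp (-(t + √(v:ℝ) - m) ^ 2 / (2 * v))
        = rexp (-(t - m) ^ 2 / (2 * v) - (t - m) / √(v:ℝ) - 1/2) := by
      congr 1
      have hveq : (v:ℝ) = (√(v:ℝ))^2 := hs0sq.symm
      set u := √(v:ℝ) with hu
      rw [hveq]
      field_simp
      ring
    have hsplit : √(2 * π * v) = √(2*π) * √(v:ℝ) := by
      rw [← Real.sqrt_mul (by positivity)]
    rw [hexp, hsplit]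
    have : √(v:ℝ) * ((√(2*π) * √(v:ℝ))⁻¹ * rexp (-(t - m) ^ 2 / (2 * v) - (t - m) / √(v:ℝ) - 1/2))
        = (√(2*π))⁻¹ * rexp (-(t - m) ^ 2 / (2 * v) - (t - m) / √(v:ℝ) - 1/2) := by
      field_simp
    rw [this]
    have : rexp (-(t - m) ^ 2 / (2 * v) - (t - m) / √(v:ℝ) - 3)
        = rexp (-(t - m) ^ 2 / (2 * v) - (t - m) / √(v:ℝ) - 1/2) * rexp (-(5/2:ℝ)) := by
      rw [← Real.exp_add]; ring_nf
    rw [this]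
    have h5 : rexp (-(5/2:ℝ)) ≤ (√(2*π))⁻¹ := by
      have h1 : √(2 * π) ≤ 3 := by
        have : (2:ℝ) * π ≤ 9 := by nlinarith [Real.pi_le_four]
        calc √(2*π) ≤ √9 := Real.sqrt_le_sqrt this
        _ = 3 := by rw [show (9:ℝ) = 3^2 by norm_num, Real.sqrt_sq (by norm_num)]
      have h2 : (0:ℝ) < √(2*π) := Real.sqrt_pos.2 (by positivity)
      rw [le_inv_comm₀ (Real.exp_pos _) h2]
      calc √(2*π) ≤ 3 := h1
        _ ≤ 1 + 5/2 := by norm_num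
        _ ≤ rexp ((5:ℝ)/2) := by have := Real.add_one_le_exp ((5:ℝ)/2); linarith
        _ = (rexp (-(5/2:ℝ)))⁻¹ := by rw [← Real.exp_neg]; ring_nf
    calc rexp (-(t - m) ^ 2 / (2 * ↑v) - (t - m) / √↑v - 1 / 2) * rexp (-(5/2:ℝ))
        ≤ rexp (-(t - m) ^ 2 / (2 * ↑v) - (t - m) / √↑v - 1 / 2) * (√(2*π))⁻¹ := by
          exact mul_le_mul_of_nonneg_left h5 (Real.exp_nonneg _)
      _ = (√(2*π))⁻¹ * rexp (-(t - m) ^ 2 / (2 * ↑v) - (t - m) / √↑v - 1/2) := by ring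
  linarith

lemma gauss_Iio_ge (m : ℝ) (hv : v ≠ 0) {t : ℝ} (h : t ≤ m) :
    rexp (-(t - m) ^ 2 / (2 * v) - (m - t) / √(v:ℝ) - 3)
      ≤ (gaussianReal m v (Iio t)).toReal := by
  have hv' : (0:ℝ) < v := by positivity
  have hs0 : (0:ℝ) < √(v:ℝ) := Real.sqrt_pos.2 hv'
  have hs0sq : (√(v:ℝ))^2 = v := Real.sq_sqrt hv'.le
  rw [gaussianReal_apply_eq_integral m hv _,
    ENNReal.toReal_ofReal (integral_nonneg fun x => gaussianPDFReal_nonneg _ _ _)]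
  have hsub : Ico (t - √(v:ℝ)) t ⊆ Iio t := Ico_subset_Iio_self
  have h1 : ∫ x in Ico (t - √(v:ℝ)) t, gaussianPDFReal m v x
      ≤ ∫ x in Iio t, gaussianPDFReal m v x :=
    setIntegral_mono_set (integrable_gaussianPDFReal m v).integrableOn
      (ae_of_all _ fun x => gaussianPDFReal_nonneg m v x) (HasSubset.Subset.eventuallyLE hsub)
  have h2 : ∫ x in Ico (t - √(v:ℝ)) t, gaussianPDFReal m v (t - √(v:ℝ))
      ≤ ∫ x in Ico (t - √(v:ℝ)) t, gaussianPDFReal m v x := by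
    refine setIntegral_mono_on (integrableOn_const measure_Ico_lt_top.ne)
      (integrable_gaussianPDFReal m v).integrableOn measurableSet_Ico fun x hx => ?_
    simp only [gaussianPDFReal]
    have hx1 : t - √(v:ℝ) ≤ x := hx.1
    have hx2 : x < t := hx.2
    have hnum : -(t - √(v:ℝ) - m)^2 / (2*(v:ℝ)) ≤ -(x - m)^2 / (2*(v:ℝ)) := by
      rw [div_le_div_iff₀ (by positivity) (by positivity)]
      have hsq : (x - m)^2 ≤ (t - √(v:ℝ) - m)^2 := by
        have e1 : (m - x)^2 ≤ (m - (t - √(v:ℝ)))^2 :=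
          pow_le_pow_left₀ (by linarith) (by linarith) 2
        calc (x - m)^2 = (m - x)^2 := by ring
          _ ≤ (m - (t - √(v:ℝ)))^2 := e1
          _ = (t - √(v:ℝ) - m)^2 := by ring
      nlinarith [hv', hsq]
    exact mul_le_mul_of_nonneg_left (Real.exp_le_exp.2 hnum) (by positivity)
  have h3 : ∫ x in Ico (t - √(v:ℝ)) t, gaussianPDFReal m v (t - √(v:ℝ))
      = √(v:ℝ) * gaussianPDFReal m v (t - √(v:ℝ)) := by
    rw [setIntegral_const, measureReal_def, Real.volume_Ico, smul_eq_mul]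
    congr 1
    rw [show t - (t - √(v:ℝ)) = √(v:ℝ) by ring, ENNReal.toReal_ofReal hs0.le]
  have h4 : rexp (-(t - m) ^ 2 / (2 * v) - (m - t) / √(v:ℝ) - 3)
      ≤ √(v:ℝ) * gaussianPDFReal m v (t - √(v:ℝ)) := by
    simp only [gaussianPDFReal]
    have hexp : rexp (-(t - √(v:ℝ) - m) ^ 2 / (2 * v))
        = rexp (-(t - m) ^ 2 / (2 * v) - (m - t) / √(v:ℝ) - 1/2) := by
      congr 1
      have hveq : (v:ℝ) = (√(v:ℝ))^2 := hs0sq.symm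
      set u := √(v:ℝ) with hu
      rw [hveq]
      field_simp
      ring
    have hsplit : √(2 * π * v) = √(2*π) * √(v:ℝ) := by
      rw [← Real.sqrt_mul (by positivity)]
    rw [hexp, hsplit]
    have heq2 : √(v:ℝ) * ((√(2*π) * √(v:ℝ))⁻¹
          * rexp (-(t - m) ^ 2 / (2 * v) - (m - t) / √(v:ℝ) - 1/2))
        = (√(2*π))⁻¹ * rexp (-(t - m) ^ 2 / (2 * v) - (m - t) / √(v:ℝ) - 1/2) := by
      field_simp
    rw [heq2]
    have heq3 : rexp (-(t - m) ^ 2 / (2 * v) - (m - t) / √(v:ℝ) - 3)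
        = rexp (-(t - m) ^ 2 / (2 * v) - (m - t) / √(v:ℝ) - 1/2) * rexp (-(5/2:ℝ)) := by
      rw [← Real.exp_add]; ring_nf
    rw [heq3]
    have h5 : rexp (-(5/2:ℝ)) ≤ (√(2*π))⁻¹ := by
      have ha : √(2 * π) ≤ 3 := by
        have : (2:ℝ) * π ≤ 9 := by nlinarith [Real.pi_le_four]
        calc √(2*π) ≤ √9 := Real.sqrt_le_sqrt this
        _ = 3 := by rw [show (9:ℝ) = 3^2 by norm_num, Real.sqrt_sq (by norm_num)]
      have hb : (0:ℝ) < √(2*π) := Real.sqrt_pos.2 (by positivity)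
      rw [le_inv_comm₀ (Real.exp_pos _) hb]
      calc √(2*π) ≤ 3 := ha
        _ ≤ 1 + 5/2 := by norm_num
        _ ≤ rexp ((5:ℝ)/2) := by have := Real.add_one_le_exp ((5:ℝ)/2); linarith
        _ = (rexp (-(5/2:ℝ)))⁻¹ := by rw [← Real.exp_neg]; ring_nf
    calc rexp (-(t - m) ^ 2 / (2 * ↑v) - (m - t) / √↑v - 1 / 2) * rexp (-(5/2:ℝ))
        ≤ rexp (-(t - m) ^ 2 / (2 * ↑v) - (m - t) / √↑v - 1 / 2) * (√(2*π))⁻¹ :=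
          mul_le_mul_of_nonneg_left h5 (Real.exp_nonneg _)
      _ = (√(2*π))⁻¹ * rexp (-(t - m) ^ 2 / (2 * ↑v) - (m - t) / √↑v - 1/2) := by ring
  linarith

lemma pi_forall_le (ν : Measure ℝ) [IsProbabilityMeasure ν] (M : ℕ) (t : ℝ) :
    Measure.pi (fun _ : Fin M => ν) {x | ∀ i, x i ≤ t} = (ν (Iic t)) ^ M := by
  have hset : {x : Fin M → ℝ | ∀ i, x i ≤ t} = Set.pi univ (fun _ => Iic t) := by
    ext x
    simp only [Set.mem_univ_pi, Set.mem_Iic, Set.mem_setOf_eq]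
  rw [hset, Measure.pi_pi, Finset.prod_const, Finset.card_univ, Fintype.card_fin]

lemma pi_exists_gt_le (ν : Measure ℝ) [IsProbabilityMeasure ν] (M : ℕ) (t : ℝ) :
    Measure.pi (fun _ : Fin M => ν) {x | ∃ i, t < x i} ≤ M * ν (Ioi t) := by
  have hset : {x : Fin M → ℝ | ∃ i, t < x i} = ⋃ i, (Function.eval i) ⁻¹' (Ioi t) := by
    ext x; simp [Function.eval]
  rw [hset]
  refine le_trans (measure_iUnion_fintype_le _ _) ?_
  have hone : ∀ i : Fin M, Measure.pi (fun _ : Fin M => ν) ((Function.eval i) ⁻¹' (Ioi t))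
      = ν (Ioi t) := by
    intro i
    rw [Set.eval_preimage, Measure.pi_pi]
    calc ∏ j, ν (Function.update (fun _ => (univ : Set ℝ)) i (Ioi t) j)
        = ν (Function.update (fun _ => (univ : Set ℝ)) i (Ioi t) i) :=
          Finset.prod_eq_single_of_mem i (Finset.mem_univ i)
            (fun j _ hj => by rw [Function.update_of_ne hj]; exact measure_univ)
      _ = ν (Ioi t) := by rw [Function.update_self]
  simp only [hone]
  rw [Finset.sum_const, Finset.card_univ, Fintype.card_fin, nsmul_eq_mul]

lemma pi_exists_gt_eq (ν : Measure ℝ) [IsProbabilityMeasure ν] (M : ℕ) (t : ℝ) :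
    Measure.pi (fun _ : Fin M => ν) {x | ∃ i, t < x i} = 1 - (ν (Iic t)) ^ M := by
  have hset : {x : Fin M → ℝ | ∃ i, t < x i} = {x : Fin M → ℝ | ∀ i, x i ≤ t}ᶜ := by
    ext x; simp [not_forall, not_le]
  have hms : MeasurableSet {x : Fin M → ℝ | ∀ i, x i ≤ t} := by
    have : {x : Fin M → ℝ | ∀ i, x i ≤ t} = ⋂ i, {x | x i ≤ t} := by ext x; simp
    rw [this]
    exact MeasurableSet.iInter fun i =>
      measurableSet_le (measurable_pi_apply i) measurable_const
  rw [hset, prob_compl_eq_one_sub hms, pi_forall_le]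

lemma success_measurable (M : ℕ) :
    MeasurableSet {p : ℝ × (Fin M → ℝ) | ∀ i : Fin M, p.2 i ≤ p.1} := by
  have : {p : ℝ × (Fin M → ℝ) | ∀ i : Fin M, p.2 i ≤ p.1}
      = ⋂ i : Fin M, {p : ℝ × (Fin M → ℝ) | p.2 i ≤ p.1} := by ext p; simp
  rw [this]
  exact MeasurableSet.iInter fun i =>
    measurableSet_le (Measurable.eval measurable_snd) measurable_fst

lemma one_sub_premSuccess (μHat σHat : ℝ) (M : ℕ) :
    1 - premSuccess μHat σHat M
      = (((ProbabilityTheory.gaussianReal (μHat * Real.log M)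
            (Real.toNNReal (σHat ^ 2 * Real.log M / 2))).prod
          (MeasureTheory.Measure.pi fun _ : Fin M =>
            ProbabilityTheory.gaussianReal 0 (Real.toNNReal (σHat ^ 2 * Real.log M / 2))))
        {p : ℝ × (Fin M → ℝ) | ∃ i : Fin M, p.1 < p.2 i}).toReal := by
  set P := (ProbabilityTheory.gaussianReal (μHat * Real.log M)
      (Real.toNNReal (σHat ^ 2 * Real.log M / 2))).prod
    (MeasureTheory.Measure.pi fun _ : Fin M =>
      ProbabilityTheory.gaussianReal 0 (Real.toNNReal (σHat ^ 2 * Real.log M / 2))) with hP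
  have hprob : IsProbabilityMeasure P := by rw [hP]; infer_instance
  have hcompl : {p : ℝ × (Fin M → ℝ) | ∃ i : Fin M, p.1 < p.2 i}
      = {p : ℝ × (Fin M → ℝ) | ∀ i : Fin M, p.2 i ≤ p.1}ᶜ := by
    ext p; simp [not_forall, not_le]
  rw [hcompl, prob_compl_eq_one_sub (success_measurable M)]
  rw [premSuccess, ENNReal.toReal_sub_of_le prob_le_one ENNReal.one_ne_top]
  simp
  rfl

lemma Q_lower (μHat σHat b : ℝ) (M : ℕ) (hσ : 0 < σHat) (hb0 : 0 ≤ b)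
    (hbm : b * σHat ≤ μHat) (hL : 1 < Real.log M)
    (hhalf : ((gaussianReal 0 (Real.toNNReal (σHat ^ 2 * Real.log M / 2)))
        (Iic (b * σHat * Real.log M))) ^ M ≤ (1/2 : ℝ≥0∞)) :
    rexp (-(b * σHat * Real.log M - μHat * Real.log M) ^ 2 / (2 * (σHat ^ 2 * Real.log M / 2))
        - (μHat * Real.log M - b * σHat * Real.log M) / √(σHat ^ 2 * Real.log M / 2) - 3) / 2
      ≤ 1 - premSuccess μHat σHat M := by
  set L := Real.log M with hLdef
  have hL0 : 0 < L := by linarith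
  set vR := σHat ^ 2 * L / 2 with hvR
  have hvR0 : 0 < vR := by positivity
  set v := Real.toNNReal vR with hv
  have hv0 : v ≠ 0 := by
    simp only [hv, ne_eq, Real.toNNReal_eq_zero, not_le]
    exact hvR0
  have hvcoe : ((v : ℝ≥0) : ℝ) = vR := Real.coe_toNNReal _ hvR0.le
  set t := b * σHat * L with ht
  set m := μHat * L with hm
  have htm : t ≤ m := by
    rw [ht, hm]
    exact mul_le_mul_of_nonneg_right hbm hL0.le
  rw [one_sub_premSuccess]
  set νE := gaussianReal m v with hνE
  set ν0 := gaussianReal 0 v with hν0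
  set πM := Measure.pi (fun _ : Fin M => ν0) with hπ
  set P := νE.prod πM with hPdef
  -- rectangle inclusion
  have hrect : (Iio t) ×ˢ {x : Fin M → ℝ | ∃ i, t < x i}
      ⊆ {p : ℝ × (Fin M → ℝ) | ∃ i : Fin M, p.1 < p.2 i} := by
    rintro ⟨e, x⟩ ⟨he, ⟨i, hi⟩⟩
    exact ⟨i, lt_trans he hi⟩
  have hP1 : P ((Iio t) ×ˢ {x : Fin M → ℝ | ∃ i, t < x i})
      ≤ P {p : ℝ × (Fin M → ℝ) | ∃ i : Fin M, p.1 < p.2 i} := measure_mono hrect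
  have hP2 : P ((Iio t) ×ˢ {x : Fin M → ℝ | ∃ i, t < x i})
      = νE (Iio t) * πM {x : Fin M → ℝ | ∃ i, t < x i} := Measure.prod_prod _ _
  have hπhalf : (1/2 : ℝ≥0∞) ≤ πM {x : Fin M → ℝ | ∃ i, t < x i} := by
    rw [hπ, pi_exists_gt_eq]
    calc (1/2 : ℝ≥0∞) = 1 - 1/2 := by
          rw [ENNReal.sub_half]; exact one_ne_top
      _ ≤ 1 - ν0 (Iic t) ^ M := tsub_le_tsub_left hhalf 1
  have hE : ENNReal.ofReal (rexp (-(t - m)^2 / (2 * vR) - (m - t) / √vR - 3))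
      ≤ νE (Iio t) := by
    have := gauss_Iio_ge (v := v) m hv0 htm
    rw [hvcoe] at this
    calc ENNReal.ofReal (rexp (-(t - m)^2 / (2 * vR) - (m - t) / √vR - 3))
        ≤ ENNReal.ofReal ((νE (Iio t)).toReal) := ENNReal.ofReal_le_ofReal this
      _ = νE (Iio t) := ENNReal.ofReal_toReal (measure_ne_top _ _)
  have hbound : ENNReal.ofReal (rexp (-(t - m)^2 / (2 * vR) - (m - t) / √vR - 3) / 2)
      ≤ P {p : ℝ × (Fin M → ℝ) | ∃ i : Fin M, p.1 < p.2 i} := by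
    have h1 : ENNReal.ofReal (rexp (-(t - m)^2 / (2 * vR) - (m - t) / √vR - 3) / 2)
        = ENNReal.ofReal (rexp (-(t - m)^2 / (2 * vR) - (m - t) / √vR - 3)) * (1/2) := by
      rw [show rexp (-(t - m)^2 / (2 * vR) - (m - t) / √vR - 3) / 2
          = rexp (-(t - m)^2 / (2 * vR) - (m - t) / √vR - 3) * (1/2) by ring,
        ENNReal.ofReal_mul (Real.exp_nonneg _)]
      congr 1
      rw [show (1/2:ℝ) = (2:ℝ)⁻¹ by norm_num, ENNReal.ofReal_inv_of_pos (by norm_num)]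
      norm_num
    rw [h1]
    calc ENNReal.ofReal (rexp (-(t - m)^2 / (2 * vR) - (m - t) / √vR - 3)) * (1/2)
        ≤ νE (Iio t) * πM {x : Fin M → ℝ | ∃ i, t < x i} :=
          mul_le_mul' hE hπhalf
      _ = P ((Iio t) ×ˢ {x : Fin M → ℝ | ∃ i, t < x i}) := hP2.symm
      _ ≤ _ := hP1
  have := ENNReal.toReal_mono (measure_ne_top _ _) hbound
  rw [ENNReal.toReal_ofReal (by positivity)] at this
  calc rexp (-(t - m)^2 / (2 * vR) - (m - t) / √vR - 3) / 2
      ≤ (P {p : ℝ × (Fin M → ℝ) | ∃ i : Fin M, p.1 < p.2 i}).toReal := this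
    _ = _ := rfl

lemma arith1 (γ h b : ℝ) (hγ1 : 1 < γ) (hh : 0 < h) (hb0 : 0 ≤ b) (hbh : b + h ≤ γ)
    (hb1 : b ≤ 1) : (γ-1)^2 - 2*γ*h ≤ (γ - (b+h))^2 := by
  rcases le_or_gt (γ - 1) h with hc | hc
  · nlinarith [sq_nonneg (γ - (b+h))]
  · nlinarith [sq_nonneg (γ - (b+h)), mul_nonneg (sub_nonneg.2 hb1) (by linarith : (0:ℝ) ≤ γ - 1 - h)]

lemma arith2 (γ h b : ℝ) (hγ1 : 1 < γ) (hγ2 : γ < 2) (hh : 0 < h) (hb1 : 1 ≤ b)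
    (hbh : b + h ≤ γ) : (γ-1)^2 - 2*γ*h ≤ (γ - (b+h))^2 + b^2 - 1 := by
  nlinarith [mul_nonneg (sub_nonneg.2 hb1) (by linarith : (0:ℝ) ≤ b - γ + 1),
    mul_pos hh (by linarith : (0:ℝ) < 2*b + h)]

lemma exp_arg_convert (μHat σHat L c : ℝ) (hσ : σHat ≠ 0) (hL : L ≠ 0) :
    -(c * σHat * L - μHat * L)^2 / (2 * (σHat^2 * L / 2)) = -(μHat/σHat - c)^2 * L := by
  field_simp
  ring

set_option maxHeartbeats 2000000 in
lemma Q_upper (μHat σHat : ℝ) (M n : ℕ) (hσ : 0 < σHat) (hμ : 0 < μHat)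
    (hγ1 : 1 < μHat/σHat) (hγ2 : μHat/σHat < 2) (hn : 1 ≤ n) (hL : 1 < Real.log M)
    (hM : 1 ≤ M) :
    1 - premSuccess μHat σHat M ≤ (n+2 : ℝ) *
      rexp ((-(μHat/σHat - 1)^2 + 2*(μHat/σHat)*(μHat/σHat/n)) * Real.log M) := by
  rw [one_sub_premSuccess]
  set γ := μHat / σHat with hγdef
  set L := Real.log M with hLdef
  have hL0 : 0 < L := by linarith
  set vR := σHat ^ 2 * L / 2 with hvR
  have hvR0 : 0 < vR := by positivity
  set v := Real.toNNReal vR with hv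
  have hv0 : v ≠ 0 := by
    simp only [hv, ne_eq, Real.toNNReal_eq_zero, not_le]; exact hvR0
  have hvcoe : ((v : ℝ≥0) : ℝ) = vR := Real.coe_toNNReal _ hvR0.le
  set m := μHat * L with hm
  have hm0 : 0 < m := by positivity
  have hn0 : (0:ℝ) < n := by exact_mod_cast hn
  set h := γ / n with hhdef
  have hh0 : 0 < h := by positivity
  set step := h * σHat * L with hstep
  have hstep0 : 0 < step := by positivity
  have hγσ : γ * σHat = μHat := by rw [hγdef]; field_simp
  have htn : (n:ℝ) * step = m := by
    have h1 : (n:ℝ) * (γ/n*σHat*L) = γ*σHat*L := by field_simp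
    rw [hstep, hhdef, h1, hγσ, hm]
  set νE := gaussianReal m v with hνE
  set ν0 := gaussianReal 0 v with hν0
  set πM := Measure.pi (fun _ : Fin M => ν0) with hπ
  set P := νE.prod πM with hPdef
  haveI : IsProbabilityMeasure ν0 := by rw [hν0]; infer_instance
  haveI : IsProbabilityMeasure νE := by rw [hνE]; infer_instance
  haveI : IsProbabilityMeasure πM := by rw [hπ]; infer_instance
  haveI : IsProbabilityMeasure P := by rw [hPdef]; infer_instance
  set target := ENNReal.ofReal (rexp ((-(γ-1)^2 + 2*γ*h) * L)) with htarget
  have hMreal : (M:ℝ) = rexp L := by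
    rw [hLdef, Real.exp_log (by exact_mod_cast Nat.lt_of_lt_of_le Nat.zero_lt_one hM)]
  -- inclusion
  have hincl : {p : ℝ × (Fin M → ℝ) | ∃ i : Fin M, p.1 < p.2 i} ⊆
      ((Iio (0:ℝ)) ×ˢ (univ : Set (Fin M → ℝ))
        ∪ ⋃ j : Fin n, (Iio (((j:ℕ):ℝ) * step + step)) ×ˢ {x : Fin M → ℝ | ∃ i, ((j:ℕ):ℝ) * step < x i})
        ∪ (univ : Set ℝ) ×ˢ {x : Fin M → ℝ | ∃ i, (n:ℝ) * step < x i} := by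
    rintro ⟨e, x⟩ ⟨i, hi⟩
    by_cases he0 : e < 0
    · exact Or.inl (Or.inl ⟨he0, mem_univ _⟩)
    push_neg at he0
    by_cases hen : (n:ℝ) * step ≤ e
    · exact Or.inr ⟨mem_univ _, i, lt_of_le_of_lt hen hi⟩
    push_neg at hen
    refine Or.inl (Or.inr ?_)
    have hdiv : e / step < n := by
      rw [div_lt_iff₀ hstep0]
      linarith [hen]
    have hjlt : ⌊e / step⌋₊ < n := by
      rw [Nat.floor_lt (by positivity)]
      exact hdiv
    refine mem_iUnion.2 ⟨⟨⌊e / step⌋₊, hjlt⟩, ?_, ?_⟩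
    · have := Nat.lt_floor_add_one (e / step)
      simp only [mem_Iio]
      have : e / step < (⌊e / step⌋₊ : ℝ) + 1 := Nat.lt_floor_add_one _
      calc e = e / step * step := by field_simp
        _ < ((⌊e / step⌋₊ : ℝ) + 1) * step := by
            exact mul_lt_mul_of_pos_right this hstep0
        _ = (⌊e / step⌋₊ : ℝ) * step + step := by ring
    · refine ⟨i, lt_of_le_of_lt ?_ hi⟩
      have := Nat.floor_le (show 0 ≤ e / step by positivity)
      calc (⌊e / step⌋₊ : ℝ) * step ≤ e / step * step :=
            mul_le_mul_of_nonneg_right this hstep0.le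
        _ = e := by field_simp
  -- bounds on the pieces
  have hA : P ((Iio (0:ℝ)) ×ˢ (univ : Set (Fin M → ℝ))) ≤ target := by
    rw [hPdef, Measure.prod_prod, measure_univ, mul_one]
    calc νE (Iio 0) ≤ νE (Iic 0) := measure_mono Iio_subset_Iic_self
      _ = ENNReal.ofReal ((νE (Iic 0)).toReal) := (ENNReal.ofReal_toReal (measure_ne_top _ _)).symm
      _ ≤ target := by
          rw [htarget]
          refine ENNReal.ofReal_le_ofReal ?_
          refine le_trans (gauss_Iic_le (v := v) m hv0 hm0.le) ?_
          rw [hvcoe]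
          rw [Real.exp_le_exp]
          have hconv : -((0:ℝ) - m)^2 / (2 * vR) = -γ^2 * L := by
            rw [hm, hvR]
            have := exp_arg_convert μHat σHat L 0 hσ.ne' hL0.ne'
            simpa [hγdef] using this
          rw [hconv]
          have : -γ^2 ≤ -(γ-1)^2 + 2*γ*h := by nlinarith
          exact mul_le_mul_of_nonneg_right this hL0.le
  have hC : P ((univ : Set ℝ) ×ˢ {x : Fin M → ℝ | ∃ i, (n:ℝ) * step < x i}) ≤ target := by
    rw [hPdef, Measure.prod_prod, measure_univ, one_mul]
    calc πM {x : Fin M → ℝ | ∃ i, (n:ℝ) * step < x i}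
        ≤ M * ν0 (Ioi ((n:ℝ) * step)) := pi_exists_gt_le ν0 M _
      _ ≤ M * ENNReal.ofReal (rexp (-γ^2 * L)) := by
          refine mul_le_mul_right ?_ _
          calc ν0 (Ioi ((n:ℝ) * step))
              = ENNReal.ofReal ((ν0 (Ioi ((n:ℝ) * step))).toReal) :=
                (ENNReal.ofReal_toReal (measure_ne_top _ _)).symm
            _ ≤ ENNReal.ofReal (rexp (-γ^2 * L)) := by
                refine ENNReal.ofReal_le_ofReal ?_
                refine le_trans (gauss_Ioi_le (v := v) 0 hv0 (by positivity)) ?_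
                rw [hvcoe, Real.exp_le_exp]
                have hconv : -((n:ℝ) * step - 0)^2 / (2 * vR) = -γ^2 * L := by
                  rw [htn, hm, hvR]
                  have := exp_arg_convert 0 σHat L γ hσ.ne' hL0.ne'
                  rw [show γ * σHat * L - 0 * L = μHat * L - 0 * L by rw [hγσ]] at this
                  simpa [hγdef] using this
                rw [hconv]
      _ = ENNReal.ofReal ((M:ℝ) * rexp (-γ^2 * L)) := by
          rw [ENNReal.ofReal_mul (by positivity), ENNReal.ofReal_natCast]
      _ ≤ target := by
          rw [htarget]
          refine ENNReal.ofReal_le_ofReal ?_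
          rw [hMreal, ← Real.exp_add]
          rw [Real.exp_le_exp]
          have : 1 - γ^2 ≤ -(γ-1)^2 + 2*γ*h := by nlinarith
          nlinarith [mul_le_mul_of_nonneg_right this hL0.le]
  have hB : ∀ j : Fin n,
      P ((Iio (((j:ℕ):ℝ) * step + step)) ×ˢ {x : Fin M → ℝ | ∃ i, ((j:ℕ):ℝ) * step < x i})
        ≤ target := by
    intro j
    have hj1n : ((j:ℕ):ℝ) + 1 ≤ n := by exact_mod_cast j.isLt
    set b := ((j:ℕ):ℝ) * h with hb
    have hb0 : 0 ≤ b := by positivity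
    have hbh : b + h ≤ γ := by
      rw [hb, hhdef]
      rw [show (j:ℕ) * (γ/n) + γ/n = (((j:ℕ):ℝ) + 1) * (γ/n) by ring]
      rw [← le_div_iff₀ (by positivity)]
      calc ((j:ℕ):ℝ) + 1 ≤ n := hj1n
        _ = γ / (γ/n) := by field_simp
    have hsmul : ((j:ℕ):ℝ) * step = b * σHat * L := by rw [hstep, hb]; ring
    have hsmul1 : ((j:ℕ):ℝ) * step + step = (b + h) * σHat * L := by rw [hstep, hb]; ring
    have htm' : (b + h) * σHat * L ≤ m := by
      rw [hm, ← hγσ]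
      have : (b + h) * σHat ≤ γ * σHat := mul_le_mul_of_nonneg_right hbh hσ.le
      exact mul_le_mul_of_nonneg_right this hL0.le
    have hE : νE (Iio (((j:ℕ):ℝ) * step + step)) ≤ ENNReal.ofReal (rexp (-(γ - (b+h))^2 * L)) := by
      calc νE (Iio (((j:ℕ):ℝ) * step + step)) ≤ νE (Iic ((b+h) * σHat * L)) := by
            rw [hsmul1]; exact measure_mono Iio_subset_Iic_self
        _ = ENNReal.ofReal ((νE (Iic ((b+h) * σHat * L))).toReal) :=
            (ENNReal.ofReal_toReal (measure_ne_top _ _)).symm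
        _ ≤ ENNReal.ofReal (rexp (-(γ - (b+h))^2 * L)) := by
            refine ENNReal.ofReal_le_ofReal ?_
            refine le_trans (gauss_Iic_le (v := v) m hv0 htm') ?_
            rw [hvcoe, Real.exp_le_exp, hm, hvR]
            rw [exp_arg_convert μHat σHat L (b+h) hσ.ne' hL0.ne']
    rw [hPdef, Measure.prod_prod]
    rcases le_or_gt b 1 with hb1 | hb1
    · calc νE (Iio (((j:ℕ):ℝ) * step + step)) * πM {x : Fin M → ℝ | ∃ i, ((j:ℕ):ℝ) * step < x i}
          ≤ ENNReal.ofReal (rexp (-(γ - (b+h))^2 * L)) * 1 :=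
            mul_le_mul' hE prob_le_one
        _ = ENNReal.ofReal (rexp (-(γ - (b+h))^2 * L)) := mul_one _
        _ ≤ target := by
            rw [htarget]
            refine ENNReal.ofReal_le_ofReal ?_
            rw [Real.exp_le_exp]
            have := arith1 γ h b hγ1 hh0 hb0 hbh hb1
            have h2 : -(γ - (b+h))^2 ≤ -(γ-1)^2 + 2*γ*h := by linarith
            exact mul_le_mul_of_nonneg_right h2 hL0.le
    · have hπb : πM {x : Fin M → ℝ | ∃ i, ((j:ℕ):ℝ) * step < x i}
          ≤ ENNReal.ofReal (rexp ((1 - b^2) * L)) := by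
        calc πM {x : Fin M → ℝ | ∃ i, ((j:ℕ):ℝ) * step < x i}
            ≤ M * ν0 (Ioi (((j:ℕ):ℝ) * step)) := pi_exists_gt_le ν0 M _
          _ ≤ M * ENNReal.ofReal (rexp (-b^2 * L)) := by
              refine mul_le_mul_right ?_ _
              calc ν0 (Ioi (((j:ℕ):ℝ) * step))
                  = ENNReal.ofReal ((ν0 (Ioi (((j:ℕ):ℝ) * step))).toReal) :=
                    (ENNReal.ofReal_toReal (measure_ne_top _ _)).symm
                _ ≤ ENNReal.ofReal (rexp (-b^2 * L)) := by
                    refine ENNReal.ofReal_le_ofReal ?_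
                    have hpos : (0:ℝ) ≤ ((j:ℕ):ℝ) * step := by positivity
                    refine le_trans (gauss_Ioi_le (v := v) 0 hv0 hpos) ?_
                    rw [hvcoe, Real.exp_le_exp, hsmul, hvR]
                    have hconv : -(b*σHat*L - 0)^2/(2*(σHat^2*L/2)) = -b^2*L := by
                      field_simp
                      ring
                    rw [hconv]
          _ = ENNReal.ofReal ((M:ℝ) * rexp (-b^2 * L)) := by
              rw [ENNReal.ofReal_mul (by positivity), ENNReal.ofReal_natCast]
          _ = ENNReal.ofReal (rexp ((1 - b^2) * L)) := by
              rw [hMreal, ← Real.exp_add]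
              congr 1
              ring
      calc νE (Iio (((j:ℕ):ℝ) * step + step)) * πM {x : Fin M → ℝ | ∃ i, ((j:ℕ):ℝ) * step < x i}
          ≤ ENNReal.ofReal (rexp (-(γ - (b+h))^2 * L)) * ENNReal.ofReal (rexp ((1 - b^2) * L)) :=
            mul_le_mul' hE hπb
        _ = ENNReal.ofReal (rexp (-(γ - (b+h))^2 * L) * rexp ((1 - b^2) * L)) :=
            (ENNReal.ofReal_mul (Real.exp_nonneg _)).symm
        _ ≤ target := by
            rw [htarget]
            refine ENNReal.ofReal_le_ofReal ?_
            rw [← Real.exp_add, Real.exp_le_exp]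
            have := arith2 γ h b hγ1 hγ2 hh0 hb1.le hbh
            nlinarith [mul_le_mul_of_nonneg_right
              (show -(γ - (b+h))^2 + (1 - b^2) ≤ -(γ-1)^2 + 2*γ*h by linarith) hL0.le]
  -- assemble
  have hPF : P {p : ℝ × (Fin M → ℝ) | ∃ i : Fin M, p.1 < p.2 i} ≤ (n + 2 : ℕ) * target := by
    refine le_trans (measure_mono hincl) ?_
    refine le_trans (measure_union_le _ _) ?_
    have h1 : P ((Iio (0:ℝ)) ×ˢ (univ : Set (Fin M → ℝ))
        ∪ ⋃ j : Fin n, (Iio (((j:ℕ):ℝ) * step + step)) ×ˢ {x : Fin M → ℝ | ∃ i, ((j:ℕ):ℝ) * step < x i})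
        ≤ target + n * target := by
      refine le_trans (measure_union_le _ _) ?_
      refine add_le_add hA ?_
      refine le_trans (measure_iUnion_fintype_le _ _) ?_
      calc ∑ j : Fin n, P ((Iio (((j:ℕ):ℝ) * step + step)) ×ˢ {x : Fin M → ℝ | ∃ i, ((j:ℕ):ℝ) * step < x i})
          ≤ ∑ _j : Fin n, target := Finset.sum_le_sum fun j _ => hB j
        _ = n * target := by rw [Finset.sum_const, Finset.card_univ, Fintype.card_fin, nsmul_eq_mul]
    calc P ((Iio (0:ℝ)) ×ˢ (univ : Set (Fin M → ℝ))
          ∪ ⋃ j : Fin n, (Iio (((j:ℕ):ℝ) * step + step)) ×ˢ {x : Fin M → ℝ | ∃ i, ((j:ℕ):ℝ) * step < x i})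
          + P ((univ : Set ℝ) ×ˢ {x : Fin M → ℝ | ∃ i, (n:ℝ) * step < x i})
        ≤ (target + n * target) + target := add_le_add h1 hC
      _ = (n + 2 : ℕ) * target := by
          push_cast
          ring
  have hfin : ((n + 2 : ℕ) : ℝ≥0∞) * target ≠ ⊤ :=
    ENNReal.mul_ne_top (ENNReal.natCast_ne_top _) ENNReal.ofReal_ne_top
  have hmono := ENNReal.toReal_mono hfin hPF
  calc (P {p : ℝ × (Fin M → ℝ) | ∃ i : Fin M, p.1 < p.2 i}).toReal
      ≤ (((n + 2 : ℕ) : ℝ≥0∞) * target).toReal := hmono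
    _ = ((n:ℝ) + 2 : ℝ) * rexp ((-(γ-1)^2 + 2*γ*h) * L) := by
        rw [ENNReal.toReal_mul, ENNReal.toReal_natCast, htarget,
          ENNReal.toReal_ofReal (Real.exp_nonneg _)]
        push_cast
        ring

lemma tendsto_sqrt_atTop' : Tendsto Real.sqrt atTop atTop := by
  refine tendsto_atTop_atTop.2 fun b => ⟨max (b^2) 0, fun a ha => ?_⟩
  have h0 : (0:ℝ) ≤ a := le_trans (le_max_right _ _) ha
  have h1 : b^2 ≤ a := le_trans (le_max_left _ _) ha
  rcases le_or_gt b 0 with hb | hb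
  · exact le_trans hb (Real.sqrt_nonneg a)
  · exact (Real.le_sqrt hb.le h0).2 h1

lemma tendsto_lin_sub_sqrt (a c d : ℝ) (ha : 0 < a) :
    Tendsto (fun M : ℕ => a * Real.log M - c * Real.sqrt (Real.log M) - d) atTop atTop := by
  have h1 : Tendsto (fun x : ℝ => a * x - c * √x - d) atTop atTop := by
    have hinner : Tendsto (fun x : ℝ => a * √x - c) atTop atTop :=
      (tendsto_atTop_add_const_right _ (-c)
        (Tendsto.const_mul_atTop ha tendsto_sqrt_atTop')).congr (fun x => by ring)
    have h2 : Tendsto (fun x : ℝ => √x * (a * √x - c) - d) atTop atTop :=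
      (tendsto_atTop_add_const_right _ (-d)
        (Tendsto.atTop_mul_atTop₀ tendsto_sqrt_atTop' hinner)).congr (fun x => by ring)
    refine h2.congr' ?_
    filter_upwards [eventually_ge_atTop (0:ℝ)] with x hx
    have hss : √x * √x = x := Real.mul_self_sqrt hx
    linear_combination a * hss
  exact h1.comp (Real.tendsto_log_atTop.comp tendsto_natCast_atTop_atTop)

lemma div_sqrt_bound (σHat L c : ℝ) (hσ : 0 < σHat) (hL : 0 < L) (hc : 0 ≤ c) :
    c * σHat * L / √(σHat^2 * L / 2) ≤ 2 * c * √L := by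
  have hsL : 0 < √L := Real.sqrt_pos.2 hL
  have hsv : σHat * √L / 2 ≤ √(σHat^2 * L / 2) := by
    rw [Real.le_sqrt (by positivity) (by positivity)]
    have : (√L)^2 = L := Real.sq_sqrt hL.le
    nlinarith [sq_nonneg σHat, this]
  have hsv0 : (0:ℝ) < √(σHat^2 * L / 2) := Real.sqrt_pos.2 (by positivity)
  calc c * σHat * L / √(σHat^2 * L / 2) ≤ c * σHat * L / (σHat * √L / 2) := by
        rw [div_le_div_iff₀ hsv0 (by positivity)]
        exact mul_le_mul_of_nonneg_left hsv (by positivity)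
    _ = 2 * c * (L / √L) := by
        rw [eq_comm]
        field_simp
    _ = 2 * c * √L := by rw [Real.div_sqrt]

lemma hhalf_ev (μHat σHat b : ℝ) (hσ : 0 < σHat) (hb0 : 0 ≤ b) (hb1 : b < 1) :
    ∀ᶠ M : ℕ in atTop, ((gaussianReal 0 (Real.toNNReal (σHat ^ 2 * Real.log M / 2)))
      (Iic (b * σHat * Real.log M))) ^ M ≤ (1/2 : ℝ≥0∞) := by
  have hb2 : 0 < 1 - b^2 := by nlinarith
  filter_upwards [(Real.tendsto_log_atTop.comp tendsto_natCast_atTop_atTop).eventually_gt_atTop 1,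
    (tendsto_lin_sub_sqrt (1 - b^2) (2*b) 3 hb2).eventually_ge_atTop 0] with M hL hcond
  have hL' : (1:ℝ) < Real.log M := hL
  set L := Real.log M with hLdef
  have hL0 : 0 < L := by linarith
  set vR := σHat ^ 2 * L / 2 with hvR
  have hvR0 : 0 < vR := by positivity
  set v := Real.toNNReal vR with hv
  have hv0 : v ≠ 0 := by
    simp only [hv, ne_eq, Real.toNNReal_eq_zero, not_le]; exact hvR0
  have hvcoe : ((v : ℝ≥0) : ℝ) = vR := Real.coe_toNNReal _ hvR0.le
  set t := b * σHat * L with ht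
  have ht0 : 0 ≤ t := by positivity
  set ν0 := gaussianReal 0 v with hν0
  haveI : IsProbabilityMeasure ν0 := by rw [hν0]; infer_instance
  set qR := (ν0 (Ioi t)).toReal with hqR
  set qlow := rexp (-b^2 * L - 2*b*√L - 3) with hqlow
  have hqlow_le : qlow ≤ qR := by
    have h1 := gauss_Ioi_ge (v := v) 0 hv0 (t := t) ht0
    rw [hvcoe] at h1
    refine le_trans ?_ h1
    rw [hqlow, Real.exp_le_exp]
    have hconv : -(t - 0)^2/(2*vR) = -b^2*L := by
      rw [ht, hvR]
      field_simp
      ring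
    have hdiv : (t - 0)/√vR ≤ 2*b*√L := by
      rw [ht, hvR, sub_zero]
      exact div_sqrt_bound σHat L b hσ hL0 hb0
    linarith [hconv, hdiv]
  have hqR1 : qR ≤ 1 := by
    rw [hqR]
    exact ENNReal.toReal_le_of_le_ofReal zero_le_one (by simpa using prob_le_one)
  have hqlow_pos : 0 < qlow := Real.exp_pos _
  have hqlow_lt1 : qlow ≤ 1 := by
    rw [hqlow]
    calc rexp (-b^2 * L - 2*b*√L - 3) ≤ rexp 0 := by
          rw [Real.exp_le_exp]
          have : 0 ≤ b^2 * L := by positivity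
          have : 0 ≤ 2*b*√L := by positivity
          linarith
      _ = 1 := Real.exp_zero
  -- measure of Iic as real
  have hIic : ν0 (Iic t) = ENNReal.ofReal (1 - qR) := by
    have hcompl : ν0 (Iic t) = 1 - ν0 (Ioi t) := by
      rw [← Set.compl_Ioi]
      exact prob_compl_eq_one_sub measurableSet_Ioi
    rw [hcompl, ← ENNReal.ofReal_one, ← ENNReal.ofReal_toReal (measure_ne_top ν0 (Ioi t)),
      ← ENNReal.ofReal_sub _ (ENNReal.toReal_nonneg)]
  rw [hIic, ← ENNReal.ofReal_pow (by linarith)]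
  have hfinal : (1 - qR)^M ≤ 1/2 := by
    have hstep1 : (1 - qR)^M ≤ (1 - qlow)^M := by
      refine pow_le_pow_left₀ (by linarith) (by linarith) M
    have hstep2 : (1 - qlow)^M ≤ rexp (-qlow)^M := by
      refine pow_le_pow_left₀ (by linarith) ?_ M
      have := Real.add_one_le_exp (-qlow)
      linarith
    have hstep3 : rexp (-qlow)^M = rexp (-(M * qlow)) := by
      rw [← Real.exp_nat_mul]
      congr 1
      ring
    have hMq : 1 ≤ (M:ℝ) * qlow := by
      have hM1 : (1:ℝ) < M := by
        by_contra hcon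
        push_neg at hcon
        have := Real.log_nonpos (Nat.cast_nonneg M) hcon
        linarith
      have hMr : (M:ℝ) = rexp L := by
        rw [hLdef, Real.exp_log (by linarith)]
      rw [hMr, hqlow, ← Real.exp_add]
      calc (1:ℝ) = rexp 0 := Real.exp_zero.symm
        _ ≤ _ := by
          rw [Real.exp_le_exp]
          have : (1 - b^2) * L - 2*b*√L - 3 ≥ 0 := hcond
          nlinarith
    have hstep4 : rexp (-(M * qlow)) ≤ rexp (-1) := by
      rw [Real.exp_le_exp]
      linarith
    have hstep5 : rexp (-1) ≤ 1/2 := by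
      rw [Real.exp_neg]
      rw [inv_le_comm₀ (Real.exp_pos 1) (by norm_num)]
      have := Real.exp_one_gt_d9
      norm_num
      linarith
    calc (1 - qR)^M ≤ (1 - qlow)^M := hstep1
      _ ≤ rexp (-qlow)^M := hstep2
      _ = rexp (-(M * qlow)) := hstep3
      _ ≤ rexp (-1) := hstep4
      _ ≤ 1/2 := hstep5
  calc ENNReal.ofReal ((1 - qR)^M) ≤ ENNReal.ofReal (1/2) := ENNReal.ofReal_le_ofReal hfinal
    _ = 1/2 := by
      rw [show (1/2:ℝ) = (2:ℝ)⁻¹ by norm_num, ENNReal.ofReal_inv_of_pos (by norm_num)]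
      norm_num

/-- in the 1-planted REM with parameters
`(μ̂ log M, σ̂ √(log M/2), M, 1)`, if `1 < γ = μ̂/σ̂ < 2`, then
`P[l̂ = l] = 1 − M^{−(γ−1)² + o(1)}`, i.e. `log(1 − P)/log M → −(γ−1)²`. -/
theorem stmt7 (μHat σHat : ℝ) (hμ : 0 < μHat) (hσ : 0 < σHat)
    (hγ1 : 1 < μHat / σHat) (hγ2 : μHat / σHat < 2) :
    Tendsto (fun M : ℕ => Real.log (1 - premSuccess μHat σHat M) / Real.log M)
      atTop (nhds (-(μHat / σHat - 1) ^ 2)) := by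
  have hγσ : (μHat / σHat) * σHat = μHat := by field_simp
  set γ := μHat / σHat with hγdef
  set c : ℝ := -(γ - 1)^2 with hcdef
  have hγ0 : 0 < γ := by linarith
  clear_value γ
  clear_value c
  refine tendsto_order.2 ⟨?_, ?_⟩
  · -- lower bound direction
    intro a ha
    set ε := c - a with hεdef
    have hε0 : 0 < ε := by simp only [hεdef]; linarith
    clear_value ε
    set δ := min (1/2 : ℝ) (ε/(8*γ)) with hδdef
    have hδ0 : 0 < δ := lt_min (by norm_num) (div_pos hε0 (by linarith))
    have hδh : δ ≤ 1/2 := min_le_left _ _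
    have hδε : δ ≤ ε/(8*γ) := min_le_right _ _
    have hδle : δ ≤ ε/(8*γ) := min_le_right _ _
    clear_value δ
    set b := 1 - δ with hbdef
    have hb0 : 0 ≤ b := by simp only [hbdef]; linarith
    have hb1 : b < 1 := by simp only [hbdef]; linarith
    clear_value b
    have hsq : (γ - b)^2 ≤ (γ-1)^2 + ε/4 := by
      have he1 : (γ - b)^2 = (γ-1)^2 + δ*(2*(γ-1)+δ) := by rw [hbdef]; ring
      have he2 : δ*(2*(γ-1)+δ) ≤ δ*(2*γ) := by
        refine mul_le_mul_of_nonneg_left (by linarith) hδ0.le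
      have he3 : δ*(2*γ) ≤ (ε/(8*γ))*(2*γ) :=
        mul_le_mul_of_nonneg_right hδε (by linarith)
      have he4 : (ε/(8*γ))*(2*γ) = ε/4 := by field_simp; ring
      linarith
    have hbm : b * σHat ≤ μHat := by
      have h1 : b * σHat ≤ γ * σHat := by
        refine mul_le_mul_of_nonneg_right (by linarith) hσ.le
      rw [hγσ] at h1
      exact h1
    filter_upwards [(Real.tendsto_log_atTop.comp tendsto_natCast_atTop_atTop).eventually_gt_atTop 1,
      hhalf_ev μHat σHat b hσ hb0 hb1,
      (tendsto_lin_sub_sqrt (ε/2) (2*γ) (3 + Real.log 2) (by linarith)).eventually_ge_atTop 0]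
      with M hL hhalf herr
    have hL' : (1:ℝ) < Real.log M := hL
    set L := Real.log (M:ℝ) with hLdef
    clear_value L
    have hL0 : 0 < L := by linarith
    have hsL0 : 0 ≤ √L := Real.sqrt_nonneg L
    have hLraw : (1:ℝ) < Real.log M := by rw [← hLdef]; exact hL'
    rw [hLdef] at hhalf
    have hQlow := Q_lower μHat σHat b M hσ hb0 hbm hLraw hhalf
    rw [← hLdef] at hQlow
    have hconv1 : -(b*σHat*L - μHat*L)^2/(2*(σHat^2*L/2)) = -(γ - b)^2*L := by
      rw [exp_arg_convert μHat σHat L b hσ.ne' hL0.ne', hγdef]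
    rw [hconv1] at hQlow
    set D := (μHat*L - b*σHat*L)/√(σHat^2*L/2) with hDdef
    have hconv2 : D ≤ 2*γ*√L := by
      have he : μHat*L - b*σHat*L = (γ - b)*σHat*L := by
        rw [← hγσ]; ring
      rw [hDdef, he]
      calc (γ - b)*σHat*L/√(σHat^2*L/2) ≤ 2*(γ-b)*√L :=
            div_sqrt_bound σHat L (γ - b) hσ hL0 (by linarith)
        _ ≤ 2*γ*√L := by
            refine mul_le_mul_of_nonneg_right ?_ hsL0
            linarith
    have hQpos : 0 < 1 - premSuccess μHat σHat M :=
      lt_of_lt_of_le (by positivity) hQlow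
    have hlog : -(γ - b)^2*L - D - 3 - Real.log 2
        ≤ Real.log (1 - premSuccess μHat σHat M) := by
      have h1 := Real.log_le_log (by positivity) hQlow
      rw [Real.log_div (Real.exp_ne_zero _) (by norm_num), Real.log_exp] at h1
      exact h1
    rw [lt_div_iff₀ hL0]
    have h2 : 2*γ*√L + (3 + Real.log 2) ≤ (ε/2)*L := by linarith [herr]
    have h3 : (-(γ-1)^2 - ε/4)*L ≤ -(γ - b)^2*L := by
      refine mul_le_mul_of_nonneg_right (by linarith) hL0.le
    have k1 : (c - (3/4)*ε)*L ≤ Real.log (1 - premSuccess μHat σHat M) := by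
      have e1 : (c - (3/4)*ε)*L = (-(γ-1)^2 - ε/4)*L - (ε/2)*L := by
        rw [hcdef]; ring
      linarith [hlog, hconv2, h2, h3]
    have k2 : (c - ε)*L < (c - (3/4)*ε)*L :=
      mul_lt_mul_of_pos_right (by linarith) hL0
    have k3 : c - ε = a := by rw [hεdef]; ring
    rw [← k3]
    linarith
  · -- upper bound direction
    intro B hB
    set ε := B - c with hεdef
    have hε0 : 0 < ε := by simp only [hεdef]; linarith
    clear_value ε
    set n := ⌈4*γ^2/ε⌉₊ + 1 with hndef
    have hn1 : 1 ≤ n := Nat.le_add_left 1 _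
    have hn0 : (0:ℝ) < n := by positivity
    have hnge : 4*γ^2/ε ≤ (n:ℝ) := by
      calc 4*γ^2/ε ≤ (⌈4*γ^2/ε⌉₊ : ℝ) := Nat.le_ceil _
        _ ≤ (n:ℝ) := by
            rw [hndef]
            push_cast
            linarith
    have hexp_le : -(γ-1)^2 + 2*γ*(γ/n) ≤ c + ε/2 := by
      have h1 : 2*γ*(γ/n) ≤ ε/2 := by
        rw [div_le_iff₀ hε0] at hnge
        rw [show 2*γ*(γ/n) = 2*γ^2/n by field_simp, div_le_div_iff₀ hn0 (by norm_num)]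
        nlinarith
      rw [hcdef]
      linarith
    have hbm2 : (1/2 : ℝ) * σHat ≤ μHat := by
      have h1 : (1/2 : ℝ) * σHat ≤ γ * σHat := by
        refine mul_le_mul_of_nonneg_right (by linarith) hσ.le
      rw [hγσ] at h1
      exact h1
    filter_upwards [(Real.tendsto_log_atTop.comp tendsto_natCast_atTop_atTop).eventually_gt_atTop 1,
      hhalf_ev μHat σHat (1/2) hσ (by norm_num) (by norm_num),
      (tendsto_lin_sub_sqrt (ε/4) 0 (Real.log (n+2)) (by linarith)).eventually_ge_atTop 0,
      eventually_ge_atTop 1]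
      with M hL hhalf herr hM1
    have hL' : (1:ℝ) < Real.log M := hL
    set L := Real.log (M:ℝ) with hLdef
    clear_value L
    have hL0 : 0 < L := by linarith
    have hLraw : (1:ℝ) < Real.log M := by rw [← hLdef]; exact hL'
    rw [hLdef] at hhalf
    have hQlow := Q_lower μHat σHat (1/2) M hσ (by norm_num) hbm2 hLraw hhalf
    have hQpos : 0 < 1 - premSuccess μHat σHat M :=
      lt_of_lt_of_le (by positivity) hQlow
    have hγ1raw : 1 < μHat/σHat := by rw [← hγdef]; exact hγ1
    have hγ2raw : μHat/σHat < 2 := by rw [← hγdef]; exact hγ2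
    have hQup := Q_upper μHat σHat M n hσ hμ hγ1raw hγ2raw hn1 hLraw hM1
    rw [← hγdef, ← hLdef] at hQup
    rw [div_lt_iff₀ hL0]
    have hlog : Real.log (1 - premSuccess μHat σHat M)
        ≤ Real.log ((n:ℝ)+2) + (-(γ-1)^2 + 2*γ*(γ/n))*L := by
      have h1 := Real.log_le_log hQpos hQup
      rw [Real.log_mul (by positivity) (Real.exp_ne_zero _), Real.log_exp] at h1
      exact h1
    have h2 : Real.log ((n:ℝ)+2) ≤ (ε/4)*L := by
      have h2' := herr
      simp only [zero_mul] at h2'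
      push_cast at h2' ⊢
      linarith
    have h3 : (-(γ-1)^2 + 2*γ*(γ/n))*L ≤ (c + ε/2)*L :=
      mul_le_mul_of_nonneg_right hexp_le hL0.le
    have k1 : Real.log (1 - premSuccess μHat σHat M) ≤ (c + (3/4)*ε)*L := by
      have e1 : (c + (3/4)*ε)*L = (ε/4)*L + (c + ε/2)*L := by ring
      linarith [hlog, h2, h3]
    have k2 : (c + (3/4)*ε)*L < (c + ε)*L :=
      mul_lt_mul_of_pos_right (by linarith) hL0
    have k3 : c + ε = B := by rw [hεdef]; ring
    rw [← k3]
    linarith
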